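/- Let Z = (Z_1,…,Z_n) be a (possibly partial) α-EFX allocation with charity P = M \ (Z_1 ∪ … ∪ Z_n), such that v_i(Z_i) ≥ v_i(P) for every agent i. Let 𝐘 ⊆ M be a set of goods such that every singleton bundle of Z is contained in 𝐘 (i.e., |Z_j| = 1 implies Z_j ⊆ 𝐘). Then for every agent i, v_i(Z_i) ≥ (α/(2(n+1))) · v_i(M \ 𝐘). -/

import Mathlib

lemma subadd_biUnion {G : Type*} [DecidableEq G] {ι : Type*} [DecidableEq ι]
    (v : Finset G → ℝ) (hnorm : v ∅ = 0)
    (hsub : ∀ A B, v (A ∪ B) ≤ v A + v B)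
    (s : Finset ι) (f : ι → Finset G) :
    v (s.biUnion f) ≤ ∑ j ∈ s, v (f j) := by
  induction s using Finset.induction with
  | empty => simp [hnorm]
  | insert _ _ h ih =>
    rename_i a s' _
    rw [Finset.biUnion_insert, Finset.sum_insert h]
    exact le_trans (hsub _ _) (by linarith)

/-- For a (possibly partial) `α`-EFX allocation `Z` with charity
`P = M \ (Z₁ ∪ … ∪ Zₙ)` satisfying `v i (Z i) ≥ v i P`, if every singleton
bundle of `Z` is contained in `𝐘`, then
`v i (Z i) ≥ (α/(2(n+1))) · v i (M \ 𝐘)` for every agent `i`. -/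
theorem value_bound_off_Y
    {G : Type*} [DecidableEq G]
    (n : ℕ) (hn : 0 < n) (M : Finset G)
    (v : Fin n → Finset G → ℝ)
    (hv0 : ∀ i A, 0 ≤ v i A)
    (hnorm : ∀ i, v i ∅ = 0)
    (hmono : ∀ i A B, A ⊆ B → v i A ≤ v i B)
    (hsub : ∀ i A B, v i (A ∪ B) ≤ v i A + v i B)
    (α : ℝ) (hα0 : 0 < α) (hα1 : α ≤ 1)
    (Z : Fin n → Finset G)
    (hZM : ∀ i, Z i ⊆ M)
    (hdisj : ∀ i j, i ≠ j → Disjoint (Z i) (Z j))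
    (hEFX : ∀ i j, ∀ g ∈ Z j, α * v i (Z j \ {g}) ≤ v i (Z i))
    (hcharity : ∀ i, v i (M \ Finset.univ.biUnion Z) ≤ v i (Z i))
    (YY : Finset G) (hYM : YY ⊆ M)
    (hsingle : ∀ j, (Z j).card = 1 → Z j ⊆ YY) :
    ∀ i, (α / (2 * ((n : ℝ) + 1))) * v i (M \ YY) ≤ v i (Z i) := by
  intro i
  -- per-bundle bound
  have hterm : ∀ j, α * v i (Z j \ YY) ≤ 2 * v i (Z i) := by
    intro j
    rcases lt_or_ge (Z j).card 2 with h | h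
    · have hd : Z j \ YY = ∅ := by
        interval_cases h' : (Z j).card
        · rw [Finset.card_eq_zero] at h'; simp [h']
        · rw [Finset.sdiff_eq_empty_iff_subset]; exact hsingle j h'
      rw [hd, hnorm, mul_zero]
      linarith [hv0 i (Z i)]
    · obtain ⟨g, hg, g', hg', hne⟩ := Finset.one_lt_card.mp h
      have h1 : v i (Z j \ YY) ≤ v i (Z j) := hmono i _ _ (Finset.sdiff_subset)
      have h2 : v i (Z j) ≤ v i (Z j \ {g}) + v i {g} := by
        have : (Z j \ {g}) ∪ {g} = Z j :=
          Finset.sdiff_union_of_subset (Finset.singleton_subset_iff.mpr hg)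
        calc v i (Z j) = v i ((Z j \ {g}) ∪ {g}) := by rw [this]
          _ ≤ _ := hsub i _ _
      have h3 : v i {g} ≤ v i (Z j \ {g'}) := by
        apply hmono
        rw [Finset.singleton_subset_iff, Finset.mem_sdiff, Finset.mem_singleton]
        exact ⟨hg, hne⟩
      have e1 := hEFX i j g hg
      have e2 := hEFX i j g' hg'
      nlinarith [hv0 i {g}, hv0 i (Z j \ {g'})]
  -- covering
  have hcover : M \ YY ⊆ (M \ Finset.univ.biUnion Z) ∪ Finset.univ.biUnion (fun j => Z j \ YY) := by
    intro g hg
    rw [Finset.mem_sdiff] at hg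
    rw [Finset.mem_union, Finset.mem_sdiff, Finset.mem_biUnion, Finset.mem_biUnion]
    by_cases hz : ∃ j ∈ Finset.univ, g ∈ Z j
    · right
      obtain ⟨j, _, hj⟩ := hz
      exact ⟨j, Finset.mem_univ j, Finset.mem_sdiff.mpr ⟨hj, hg.2⟩⟩
    · left; exact ⟨hg.1, hz⟩
  have hbiU := subadd_biUnion (v i) (hnorm i) (hsub i) Finset.univ (fun j => Z j \ YY)
  have hmain : v i (M \ YY) ≤ v i (Z i) + ∑ j, v i (Z j \ YY) := by
    calc v i (M \ YY) ≤ v i ((M \ Finset.univ.biUnion Z) ∪ Finset.univ.biUnion (fun j => Z j \ YY)) :=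
          hmono i _ _ hcover
      _ ≤ v i (M \ Finset.univ.biUnion Z) + v i (Finset.univ.biUnion (fun j => Z j \ YY)) := hsub i _ _
      _ ≤ v i (Z i) + ∑ j, v i (Z j \ YY) := add_le_add (hcharity i) hbiU
  have hsum : α * ∑ j, v i (Z j \ YY) ≤ (n : ℝ) * (2 * v i (Z i)) := by
    rw [Finset.mul_sum]
    calc ∑ j, α * v i (Z j \ YY) ≤ ∑ _j : Fin n, 2 * v i (Z i) :=
          Finset.sum_le_sum (fun j _ => hterm j)
      _ = (n : ℝ) * (2 * v i (Z i)) := by simp [Finset.sum_const, mul_comm]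
  have hpos : (0:ℝ) < 2 * ((n:ℝ) + 1) := by positivity
  rw [div_mul_eq_mul_div, div_le_iff₀ hpos]
  have hz0 := hv0 i (Z i)
  have hy0 := hv0 i (M \ YY)
  nlinarith [mul_le_mul_of_nonneg_left hmain (le_of_lt hα0)]
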